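/- Let G₁ and G₂ be finite simple graphs on disjoint vertex sets, each having at least two vertices and containing no well-connected vertex. Then the connective eccentric index of the join G₁ + G₂ equals |E(G₁)| + |E(G₂)| + |V(G₁)|·|V(G₂)|. -/

import Mathlib

/-- The eccentricity of a vertex `v` in a finite graph `G`:
the maximum distance from `v` to any other vertex. -/
noncomputable def eccentricity {V : Type*} [Fintype V] (G : SimpleGraph V) (v : V) : ℕ :=
  Finset.univ.sup fun u => G.dist v u

/-- The connective eccentric index `C^ξ(G) = ∑_v deg(v)/ε(v)`, as a rational number. -/
noncomputable def connEccIndex {V : Type*} [Fintype V] (G : SimpleGraph V) : ℚ :=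
  letI := Classical.decRel G.Adj
  ∑ v : V, (G.degree v : ℚ) / (eccentricity G v)

/-- The number of edges of `G`. -/
noncomputable def numEdges {V : Type*} (G : SimpleGraph V) : ℕ := G.edgeSet.ncard

/-- A vertex is well-connected if it is adjacent to every other vertex. -/
def IsWellConnected {V : Type*} (G : SimpleGraph V) (v : V) : Prop :=
  ∀ u : V, u ≠ v → G.Adj v u

/-- The join `G₁ + G₂` of two graphs on disjoint vertex sets: all edges of `G₁` and of
`G₂`, together with all edges between the two vertex sets. -/
def joinGraph {V W : Type*} (G : SimpleGraph V) (H : SimpleGraph W) :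
    SimpleGraph (V ⊕ W) where
  Adj x y :=
    match x, y with
    | .inl a, .inl b => G.Adj a b
    | .inr a, .inr b => H.Adj a b
    | .inl _, .inr _ => True
    | .inr _, .inl _ => True
  symm := by
    constructor
    intro x y h
    cases x <;> cases y <;> simp_all
    · exact G.symm.symm _ _ h
    · exact H.symm.symm _ _ h
  loopless := by
    constructor
    intro x h
    cases x
    · exact G.loopless.irrefl _ h
    · exact H.loopless.irrefl _ h

section Aux

variable {V W : Type*} [Fintype V] [Fintype W] (G : SimpleGraph V) (H : SimpleGraph W)

lemma joinGraph_adj_lr (a : V) (b : W) : (joinGraph G H).Adj (.inl a) (.inr b) := trivial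
lemma joinGraph_adj_rl (a : W) (b : V) : (joinGraph G H).Adj (.inr a) (.inl b) := trivial

lemma joinGraph_dist_le_two [Nonempty V] [Nonempty W] (x y : V ⊕ W) :
    (joinGraph G H).dist x y ≤ 2 := by
  obtain ⟨v⟩ := ‹Nonempty V›
  obtain ⟨w⟩ := ‹Nonempty W›
  cases x with
  | inl a =>
    cases y with
    | inl b =>
      refine le_trans (SimpleGraph.dist_le
        (.cons (joinGraph_adj_lr G H a w) (.cons (joinGraph_adj_rl G H w b) .nil))) ?_
      simp
    | inr b =>
      refine le_trans (SimpleGraph.dist_le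
        (.cons (joinGraph_adj_lr G H a b) .nil)) ?_
      simp
  | inr a =>
    cases y with
    | inl b =>
      refine le_trans (SimpleGraph.dist_le
        (.cons (joinGraph_adj_rl G H a b) .nil)) ?_
      simp
    | inr b =>
      refine le_trans (SimpleGraph.dist_le
        (.cons (joinGraph_adj_rl G H a v) (.cons (joinGraph_adj_lr G H v b) .nil))) ?_
      simp

lemma joinGraph_ecc_eq_two [Nonempty V] [Nonempty W]
    (hG : ∀ v : V, ¬ IsWellConnected G v) (hH : ∀ w : W, ¬ IsWellConnected H w)
    (x : V ⊕ W) : eccentricity (joinGraph G H) x = 2 := by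
  apply le_antisymm
  · exact Finset.sup_le fun u _ => joinGraph_dist_le_two G H x u
  · have key : ∀ y : V ⊕ W, ¬ (joinGraph G H).Adj x y → y ≠ x →
        2 ≤ eccentricity (joinGraph G H) x := by
      intro y hadj hne
      have hle := joinGraph_dist_le_two G H x y
      have h0 : (joinGraph G H).dist x y ≠ 0 := by
        rw [SimpleGraph.dist_ne_zero_iff_ne_and_reachable]
        refine ⟨hne.symm, ?_⟩
        have := joinGraph_dist_le_two G H x y
        cases x with
        | inl a => cases y with
          | inl b =>
            obtain ⟨w⟩ := ‹Nonempty W›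
            exact ⟨.cons (joinGraph_adj_lr G H a w) (.cons (joinGraph_adj_rl G H w b) .nil)⟩
          | inr b => exact ⟨.cons (joinGraph_adj_lr G H a b) .nil⟩
        | inr a => cases y with
          | inl b => exact ⟨.cons (joinGraph_adj_rl G H a b) .nil⟩
          | inr b =>
            obtain ⟨v⟩ := ‹Nonempty V›
            exact ⟨.cons (joinGraph_adj_rl G H a v) (.cons (joinGraph_adj_lr G H v b) .nil)⟩
      have h1 : (joinGraph G H).dist x y ≠ 1 := by
        intro h; exact hadj (SimpleGraph.dist_eq_one_iff_adj.mp h)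
      have h2 : 2 ≤ (joinGraph G H).dist x y := by omega
      exact h2.trans (Finset.le_sup (Finset.mem_univ y))
    cases x with
    | inl a =>
      obtain ⟨u, hu⟩ := not_forall.mp (hG a)
      rw [Classical.not_imp] at hu
      exact key (.inl u) (by simpa [joinGraph] using hu.2) (by simp [hu.1])
    | inr a =>
      obtain ⟨u, hu⟩ := not_forall.mp (hH a)
      rw [Classical.not_imp] at hu
      exact key (.inr u) (by simpa [joinGraph] using hu.2) (by simp [hu.1])

lemma joinGraph_neighborFinset_inl [DecidableEq V] [DecidableEq W] [DecidableRel G.Adj] [DecidableRel H.Adj]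
    [DecidableRel (joinGraph G H).Adj] (a : V) :
    (joinGraph G H).neighborFinset (.inl a) =
      (G.neighborFinset a).map ⟨Sum.inl, Sum.inl_injective⟩ ∪
        Finset.univ.map ⟨Sum.inr, Sum.inr_injective⟩ := by
  ext x
  cases x <;> simp only [SimpleGraph.mem_neighborFinset] <;> simp [joinGraph]

lemma joinGraph_neighborFinset_inr [DecidableEq V] [DecidableEq W] [DecidableRel G.Adj] [DecidableRel H.Adj]
    [DecidableRel (joinGraph G H).Adj] (a : W) :
    (joinGraph G H).neighborFinset (.inr a) =
      (H.neighborFinset a).map ⟨Sum.inr, Sum.inr_injective⟩ ∪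
        Finset.univ.map ⟨Sum.inl, Sum.inl_injective⟩ := by
  ext x
  cases x <;> simp only [SimpleGraph.mem_neighborFinset] <;> simp [joinGraph]

lemma joinGraph_degree_inl [DecidableRel G.Adj] [DecidableRel H.Adj]
    [DecidableRel (joinGraph G H).Adj] (a : V) :
    (joinGraph G H).degree (.inl a) = G.degree a + Fintype.card W := by
  classical
  rw [SimpleGraph.degree, joinGraph_neighborFinset_inl, Finset.card_union_of_disjoint]
  · rw [Finset.card_map, Finset.card_map, Finset.card_univ, SimpleGraph.degree]
  · simp [Finset.disjoint_left]

lemma joinGraph_degree_inr [DecidableRel G.Adj] [DecidableRel H.Adj]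
    [DecidableRel (joinGraph G H).Adj] (a : W) :
    (joinGraph G H).degree (.inr a) = H.degree a + Fintype.card V := by
  classical
  rw [SimpleGraph.degree, joinGraph_neighborFinset_inr, Finset.card_union_of_disjoint]
  · rw [Finset.card_map, Finset.card_map, Finset.card_univ, SimpleGraph.degree]
  · simp [Finset.disjoint_left]

end Aux

/-- The connective eccentric index of the join of two graphs without well-connected
vertices equals `|E(G₁)| + |E(G₂)| + |V(G₁)||V(G₂)|`. -/
theorem connEccIndex_join {V W : Type*} [Fintype V] [Fintype W]
    (G : SimpleGraph V) (H : SimpleGraph W)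
    (hV : 2 ≤ Fintype.card V) (hW : 2 ≤ Fintype.card W)
    (hG : ∀ v : V, ¬ IsWellConnected G v) (hH : ∀ w : W, ¬ IsWellConnected H w) :
    connEccIndex (joinGraph G H) =
      (numEdges G : ℚ) + (numEdges H : ℚ) + (Fintype.card V : ℚ) * (Fintype.card W : ℚ) := by
  classical
  have hVne : Nonempty V := Fintype.card_pos_iff.mp (by omega)
  have hWne : Nonempty W := Fintype.card_pos_iff.mp (by omega)
  rw [connEccIndex]
  have hdeg : ∀ x : V ⊕ W, ∀ (inst : DecidableRel (joinGraph G H).Adj),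
      (@SimpleGraph.degree _ (joinGraph G H) x (SimpleGraph.neighborSetFintype _ _) : ℚ)
        = ((joinGraph G H).degree x : ℚ) := by
    intro x inst; congr 1
  simp only [joinGraph_ecc_eq_two G H hG hH]
  have : ∀ x : V ⊕ W,
      ((@SimpleGraph.degree _ (joinGraph G H) x
        (@SimpleGraph.neighborSetFintype _ (joinGraph G H) _
          (Classical.decRel (joinGraph G H).Adj) x)) : ℕ)
        = (joinGraph G H).degree x := by
    intro x; congr 1
  rw [Finset.sum_congr rfl fun x _ => by rw [this x]]
  rw [Fintype.sum_sum_type]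
  simp only [joinGraph_degree_inl, joinGraph_degree_inr]
  push_cast
  rw [← Finset.sum_div, ← Finset.sum_div, Finset.sum_add_distrib, Finset.sum_add_distrib,
      Finset.sum_const, Finset.sum_const, Finset.card_univ, Finset.card_univ,
      nsmul_eq_mul, nsmul_eq_mul]
  have hE1 : (numEdges G : ℚ) = (G.edgeFinset.card : ℚ) := by
    rw [numEdges, ← SimpleGraph.coe_edgeFinset, Set.ncard_coe_finset]
  have hE2 : (numEdges H : ℚ) = (H.edgeFinset.card : ℚ) := by
    rw [numEdges, ← SimpleGraph.coe_edgeFinset, Set.ncard_coe_finset]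
  have h1 : (∑ a : V, (G.degree a : ℚ)) = 2 * (numEdges G : ℚ) := by
    rw [hE1]
    exact_mod_cast congrArg (Nat.cast : ℕ → ℚ) (G.sum_degrees_eq_twice_card_edges)
  have h2 : (∑ a : W, (H.degree a : ℚ)) = 2 * (numEdges H : ℚ) := by
    rw [hE2]
    exact_mod_cast congrArg (Nat.cast : ℕ → ℚ) (H.sum_degrees_eq_twice_card_edges)
  rw [h1, h2]
  ring
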